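/- arXiv:1612.09481 — 10 statements merged into one kernel-verified Lean document; each statement's English description precedes it below -/
import Mathlib

section
/- If S is a doubly fractal sequence (i.e., S(1)=1 and both its upper-trimmed and lower-trimmed subsequences equal S) and S(2) ≠ 1, then S(2) = 2. -/
/-- `upperTrim S` removes from `S` every first occurrence of every value. -/
noncomputable def upperTrim (S : ℕ → ℕ) : ℕ → ℕ :=
  fun k => S (Nat.nth (fun i => ¬ ∀ j < i, S j ≠ S i) k)

/-- `lowerTrim S` subtracts 1 from each term and deletes the resulting zeros. -/
noncomputable def lowerTrim (S : ℕ → ℕ) : ℕ → ℕ :=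
  fun k => S (Nat.nth (fun i => 2 ≤ S i) k) - 1

/-- A sequence of positive integers, in which every positive integer occurs,
is doubly fractal if its first term is 1 and both trimmings return `S`. -/
def DoublyFractal (S : ℕ → ℕ) : Prop :=
  (∀ i, 0 < S i) ∧ (∀ m, 0 < m → ∃ i, S i = m) ∧
  S 0 = 1 ∧ upperTrim S = S ∧ lowerTrim S = S

/-- `S` is the signature sequence of `θ`: there is an enumeration `p` of all pairs of
positive integers, sorted increasingly by the value `i + j*θ`, with `S k = (p k).1`. -/
def IsSignature (θ : ℝ) (S : ℕ → ℕ) : Prop :=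
  ∃ p : ℕ → ℕ × ℕ,
    (∀ k, 0 < (p k).1 ∧ 0 < (p k).2) ∧
    (∀ i j, 0 < i → 0 < j → ∃ k, p k = (i, j)) ∧
    StrictMono (fun k => ((p k).1 : ℝ) + (p k).2 * θ) ∧
    ∀ k, S k = (p k).1

/-- If S is doubly fractal and S(2) ≠ 1 then S(2) = 2 (indices shifted to start at 0). -/
theorem stmt0 (S : ℕ → ℕ) (hS : DoublyFractal S) (h2 : S 1 ≠ 1) : S 1 = 2 := by
  obtain ⟨hpos, hsurj, h0, hup, hlow⟩ := hS
  have hS1 : 2 ≤ S 1 := by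
    have := hpos 1
    omega
  have hnth : Nat.nth (fun i => 2 ≤ S i) 0 = 1 := by
    rw [Nat.nth_zero]
    have h1mem : (1 : ℕ) ∈ {n | 2 ≤ S n} := hS1
    refine le_antisymm (Nat.sInf_le h1mem) ?_
    have h0ne : sInf {n | 2 ≤ S n} ≠ 0 := by
      intro h
      have := Nat.sInf_eq_zero.mp h
      rcases this with h | h
      · simp [Set.mem_setOf_eq, h0] at h
      · exact absurd h1mem (by simp [h])
    omega
  have := congrFun hlow 0
  simp only [lowerTrim, hnth, h0] at this
  omega
end

section
/- If S is a doubly fractal sequence with S(2) ≠ 1, and n is the greatest integer k such that S(j) = j for all j ≤ k, then S(n+1) = 1. -/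
/-- If S is doubly fractal, S(2) ≠ 1 and n is the greatest k with S(j)=j for all j ≤ k,
then S(n+1) = 1 (indices shifted to start at 0). -/
theorem stmt1 (S : ℕ → ℕ) (hS : DoublyFractal S) (h2 : S 1 ≠ 1)
    (n : ℕ) (hn : 0 < n) (hinit : ∀ j < n, S j = j + 1) (hmax : S n ≠ n + 1) :
    S n = 1 := by
  obtain ⟨hpos, hsurj, h0, hup, hlow⟩ := hS
  by_contra hne
  have h2n : 2 ≤ S n := by have := hpos n; omega
  have hcount : ∀ m ≤ n, Nat.count (fun i => 2 ≤ S i) m = m - 1 := by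
    intro m hm
    induction m with
    | zero => simp
    | succ k ih =>
      rw [Nat.count_succ, ih (le_of_lt (Nat.lt_of_succ_le hm))]
      have hk : S k = k + 1 := hinit k (Nat.lt_of_succ_le hm)
      rcases Nat.eq_zero_or_pos k with h | h
      · have hlt2 : ¬ 2 ≤ S k := by omega
        simp [hlt2]
        omega
      · have : 2 ≤ S k := by omega
        simp only [this, if_true]
        omega
  have hnth : Nat.nth (fun i => 2 ≤ S i) (n - 1) = n := by
    have h := Nat.nth_count (p := fun i => 2 ≤ S i) h2n
    rwa [hcount n le_rfl] at h
  have hlt : n - 1 < n := by omega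
  have heq := congrFun hlow (n - 1)
  simp only [lowerTrim, hnth] at heq
  rw [hinit (n - 1) hlt] at heq
  omega
end

section
/- If S is a doubly fractal sequence with S(k) = 1 for k = 1,…,n and S(n+1) ≠ 1, then S(n+1) = 2. -/
/-- If S is doubly fractal, S(k)=1 for k=1,…,n and S(n+1) ≠ 1, then S(n+1)=2
(indices shifted to start at 0). -/
theorem stmt2 (S : ℕ → ℕ) (hS : DoublyFractal S)
    (n : ℕ) (hn : 0 < n) (hinit : ∀ j < n, S j = 1) (hne : S n ≠ 1) :
    S n = 2 := by
  obtain ⟨hpos, hsurj, h0, hup, hlow⟩ := hS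
  have hn2 : 2 ≤ S n := by
    have := hpos n
    omega
  have hinf : sInf {i | 2 ≤ S i} = n := by
    have hne' : n ∈ {i | 2 ≤ S i} := hn2
    have h1 : sInf {i | 2 ≤ S i} ≤ n := Nat.sInf_le hne'
    have h2 : sInf {i | 2 ≤ S i} ∈ {i | 2 ≤ S i} := Nat.sInf_mem ⟨n, hne'⟩
    by_contra hc
    have hlt : sInf {i | 2 ≤ S i} < n := lt_of_le_of_ne h1 hc
    have := hinit _ hlt
    simp only [Set.mem_setOf_eq] at h2
    omega
  have := congrFun hlow 0
  rw [lowerTrim, Nat.nth_zero] at this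
  simp only [h0] at this
  have hinf' : sInf (setOf (fun i => 2 ≤ S i)) = n := hinf
  erw [hinf'] at this
  omega
end

section
/- Every doubly fractal sequence has an initial segment of the form (1,2,3,…,n,1) for some n ≥ 1, or of the form (1,1,…,1,2) with n ≥ 2 ones. -/
/-- Every doubly fractal sequence begins with (1,2,…,n,1) for some n ≥ 1,
or with n ≥ 2 ones followed by a 2 (indices shifted to start at 0). -/
theorem stmt3 (S : ℕ → ℕ) (hS : DoublyFractal S) :
    (∃ n, 1 ≤ n ∧ (∀ j < n, S j = j + 1) ∧ S n = 1) ∨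
    (∃ n, 2 ≤ n ∧ (∀ j < n, S j = 1) ∧ S n = 2) := by
  obtain ⟨hpos, hsurj, h0, hup, hlow⟩ := hS
  -- Q : indices with value ≥ 2
  have hQinf : {i | 2 ≤ S i}.Infinite := by
    refine Set.infinite_of_injective_forall_mem
      (f := fun m : ℕ => Classical.choose (hsurj (m + 2) (by omega))) ?_ ?_
    · intro a b hab
      have ha := Classical.choose_spec (hsurj (a + 2) (by omega))
      have hb := Classical.choose_spec (hsurj (b + 2) (by omega))
      simp only at hab
      rw [hab] at ha
      omega
    · intro m
      have := Classical.choose_spec (hsurj (m + 2) (by omega))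
      simp only [Set.mem_setOf_eq]
      omega
  have hmem : ∀ k, 2 ≤ S (Nat.nth (fun i => 2 ≤ S i) k) := fun k =>
    Nat.nth_mem_of_infinite hQinf k
  have hrel : ∀ k, S (Nat.nth (fun i => 2 ≤ S i) k) = S k + 1 := by
    intro k
    have h1 := congrFun hlow k
    simp only [lowerTrim] at h1
    have h2 := hmem k
    omega
  have hQ0 : ¬ (2 ≤ S 0) := by omega
  -- Claim A: 1 occurs at a positive index
  have claimA : ∃ i, 0 < i ∧ S i = 1 := by
    by_contra hc
    push_neg at hc
    have key : ∀ m i, S i = m + 1 → i = (Nat.nth (fun i => 2 ≤ S i))^[m] 0 := by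
      intro m
      induction m with
      | zero =>
        intro i hi
        simp only [Function.iterate_zero, id_eq]
        by_contra h
        exact hc i (Nat.pos_of_ne_zero h) hi
      | succ m ih =>
        intro i hi
        have hiQ : 2 ≤ S i := by omega
        have hnc : Nat.nth (fun i => 2 ≤ S i) (Nat.count (fun i => 2 ≤ S i) i) = i :=
          Nat.nth_count hiQ
        have hk := hrel (Nat.count (fun i => 2 ≤ S i) i)
        rw [hnc] at hk
        have hsm : S (Nat.count (fun i => 2 ≤ S i) i) = m + 1 := by omega
        have := ih _ hsm
        rw [Function.iterate_succ_apply', ← this, hnc]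
    have hinj : Function.Injective S := by
      intro a b hab
      have hpa := hpos a
      have hpb := hpos b
      have ha := key (S a - 1) a (by omega)
      have hb := key (S b - 1) b (by omega)
      rw [hab] at ha
      exact ha.trans hb.symm
    have hPempty : ∀ i, ¬ ¬ ∀ j < i, S j ≠ S i := by
      intro i h
      push_neg at h
      obtain ⟨j, hj, hji⟩ := h
      exact absurd (hinj hji) (Nat.ne_of_lt hj)
    have hPfin : {i | ¬ ∀ j < i, S j ≠ S i}.Finite := by
      convert Set.finite_empty using 1
      ext i
      simp only [Set.mem_setOf_eq, Set.mem_empty_iff_false, iff_false]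
      exact hPempty i
    have hnthP : Nat.nth (fun i => ¬ ∀ j < i, S j ≠ S i) 1 = 0 := by
      rw [Nat.nth_eq_zero]
      right
      refine ⟨hPfin, ?_⟩
      have : hPfin.toFinset = ∅ := by
        ext i
        simp only [Set.Finite.mem_toFinset, Set.mem_setOf_eq, Finset.notMem_empty, iff_false]
        exact hPempty i
      rw [this]
      simp
    have hu1 := congrFun hup 1
    simp only [upperTrim, hnthP, h0] at hu1
    exact hc 1 one_pos hu1.symm
  by_cases h1 : S 1 = 1
  · -- second branch: ones then a 2
    right
    set n := Nat.nth (fun i => 2 ≤ S i) 0 with hn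
    have hnQ : 2 ≤ S n := hmem 0
    have hlt : ∀ j < n, ¬ (2 ≤ S j) := by
      intro j hj hQj
      have : n ≤ j := by
        rw [hn, Nat.nth_zero]
        exact Nat.sInf_le hQj
      omega
    have hQ1 : ¬ (2 ≤ S 1) := by omega
    have hn2 : 2 ≤ n := by
      rcases Nat.lt_or_ge n 2 with h | h
      · interval_cases n <;> omega
      · exact h
    refine ⟨n, hn2, ?_, ?_⟩
    · intro j hj
      have := hlt j hj
      have := hpos j
      omega
    · have := hrel 0
      rw [h0] at this
      exact this
  · -- first branch: 1,2,...,n,1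
    left
    have hex : ∃ i, 0 < i ∧ S i = 1 := claimA
    set n := Nat.find hex with hn
    obtain ⟨hn0, hSn⟩ := Nat.find_spec hex
    have hmin : ∀ j < n, 0 < j → S j ≠ 1 := by
      intro j hj hj0
      have := Nat.find_min hex hj
      tauto
    have hQj : ∀ j, 0 < j → j < n → 2 ≤ S j := by
      intro j hj0 hjn
      have := hmin j hjn hj0
      have := hpos j
      omega
    have hcount : ∀ j, 0 < j → j ≤ n → Nat.count (fun i => 2 ≤ S i) j = j - 1 := by
      intro j
      induction j with
      | zero => omega
      | succ j ih =>
        intro _ hjn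
        rw [Nat.count_succ]
        rcases Nat.eq_zero_or_pos j with rfl | hj0
        · simp [hQ0, Nat.count_zero]
        · rw [ih hj0 (by omega)]
          have : 2 ≤ S j := hQj j hj0 (by omega)
          simp [this]
          omega
    have hval : ∀ j, j < n → S j = j + 1 := by
      intro j
      induction j with
      | zero => intro _; exact h0
      | succ j ih =>
        intro hjn
        have hQj1 : 2 ≤ S (j + 1) := hQj (j + 1) (by omega) hjn
        have hnc := Nat.nth_count (p := fun i => 2 ≤ S i) hQj1
        have hc1 : Nat.count (fun i => 2 ≤ S i) (j + 1) = j := by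
          have := hcount (j + 1) (by omega) (by omega)
          omega
        rw [hc1] at hnc
        have := hrel j
        rw [hnc] at this
        rw [this, ih (by omega)]
    exact ⟨n, by omega, hval, hSn⟩
end

section
/- Distinct positive irrational numbers have distinct signature sequences: if α ≠ β are positive irrationals, then S_α ≠ S_β. -/
lemma sig_snd (θ : ℝ) (hθ : 0 < θ) (p : ℕ → ℕ × ℕ)
    (hpos : ∀ k, 0 < (p k).1 ∧ 0 < (p k).2)
    (hsurj : ∀ i j, 0 < i → 0 < j → ∃ k, p k = (i, j))
    (hmono : StrictMono (fun k => ((p k).1 : ℝ) + (p k).2 * θ)) (k : ℕ) :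
    ((Finset.range (k+1)).filter (fun k' => (p k').1 = (p k).1)).card = (p k).2 := by
  have hinj : Function.Injective p := by
    intro a b hab
    exact hmono.injective (by simp [hab])
  have hle : ∀ a b : ℕ, (p a).1 = (p b).1 → a ≤ b → (p a).2 ≤ (p b).2 := by
    intro a b h1 hab
    have := hmono.monotone hab
    simp only [h1] at this
    have h2 : ((p a).2 : ℝ) * θ ≤ ((p b).2 : ℝ) * θ := by linarith
    exact_mod_cast le_of_mul_le_mul_right h2 hθ
  have : ((Finset.range (k+1)).filter (fun k' => (p k').1 = (p k).1)).card
      = (Finset.Icc 1 (p k).2).card := by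
    apply Finset.card_bij (fun k' _ => (p k').2)
    · intro a ha
      simp only [Finset.mem_filter, Finset.mem_range] at ha
      rw [Finset.mem_Icc]
      exact ⟨(hpos a).2, hle a k ha.2 (Nat.lt_succ_iff.mp ha.1)⟩
    · intro a ha b hb hab
      simp only [Finset.mem_filter, Finset.mem_range] at ha hb
      exact hinj (Prod.ext (ha.2.trans hb.2.symm) hab)
    · intro j hj
      rw [Finset.mem_Icc] at hj
      obtain ⟨k', hk'⟩ := hsurj (p k).1 j (hpos k).1 hj.1
      refine ⟨k', ?_, by simp [hk']⟩
      simp only [Finset.mem_filter, Finset.mem_range, hk']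
      have hval : ((p k').1 : ℝ) + (p k').2 * θ ≤ ((p k).1 : ℝ) + (p k).2 * θ := by
        rw [hk']
        have : (j : ℝ) * θ ≤ ((p k).2 : ℝ) * θ := by
          apply mul_le_mul_of_nonneg_right _ hθ.le
          exact_mod_cast hj.2
        simp; linarith
      have := hmono.le_iff_le.mp hval
      exact ⟨Nat.lt_succ_of_le this, by simp⟩
  rw [this, Nat.card_Icc]
  omega

lemma sig_key (α β : ℝ) (hα : 0 < α) (hlt : α < β) (p : ℕ → ℕ × ℕ)
    (hsurj : ∀ i j, 0 < i → 0 < j → ∃ k, p k = (i, j))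
    (hma : StrictMono (fun k => ((p k).1 : ℝ) + (p k).2 * α))
    (hmb : StrictMono (fun k => ((p k).1 : ℝ) + (p k).2 * β)) : False := by
  obtain ⟨q, hq1, hq2⟩ := exists_rat_btwn hlt
  have hq0 : 0 < q := by exact_mod_cast hα.trans hq1
  set m : ℕ := q.num.toNat with hm
  set n : ℕ := q.den with hn
  have hm0 : 0 < m := by
    have := Rat.num_pos.mpr hq0
    simp only [hm]
    omega
  have hn0 : 0 < n := q.pos
  have hqcast : (q : ℝ) = (m : ℝ) / (n : ℝ) := by
    rw [Rat.cast_def, hm, hn]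
    congr 1
    exact_mod_cast (Int.toNat_of_nonneg (Rat.num_pos.mpr hq0).le).symm
  have hn0' : (0:ℝ) < n := by exact_mod_cast hn0
  have h1 : (n : ℝ) * α < m := by
    rw [hqcast] at hq1
    rw [mul_comm]
    exact (lt_div_iff₀ hn0').mp hq1
  have h2 : (m : ℝ) < n * β := by
    rw [hqcast] at hq2
    rw [mul_comm]
    exact (div_lt_iff₀ hn0').mp hq2
  obtain ⟨k1, hk1⟩ := hsurj (m+1) 1 (Nat.succ_pos m) one_pos
  obtain ⟨k2, hk2⟩ := hsurj 1 (n+1) one_pos (Nat.succ_pos n)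
  have c1 : k2 < k1 := by
    apply hma.lt_iff_lt.mp
    simp only [hk1, hk2]
    push_cast
    nlinarith
  have c2 : k1 < k2 := by
    apply hmb.lt_iff_lt.mp
    simp only [hk1, hk2]
    push_cast
    nlinarith
  omega

/-- Distinct positive irrational numbers have distinct signature sequences. -/
theorem stmt7 (α β : ℝ) (hαpos : 0 < α) (hβpos : 0 < β)
    (hαirr : Irrational α) (hβirr : Irrational β) (hne : α ≠ β)
    (Sa Sb : ℕ → ℕ) (ha : IsSignature α Sa) (hb : IsSignature β Sb) :
    Sa ≠ Sb := by
  intro hS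
  obtain ⟨pa, hapos, hasurj, hamono, haeq⟩ := ha
  obtain ⟨pb, hbpos, hbsurj, hbmono, hbeq⟩ := hb
  have hfst : ∀ k, (pa k).1 = (pb k).1 := by
    intro k; rw [← haeq, ← hbeq, hS]
  have hpp : pa = pb := by
    funext k
    refine Prod.ext (hfst k) ?_
    rw [← sig_snd α hαpos pa hapos hasurj hamono k,
        ← sig_snd β hβpos pb hbpos hbsurj hbmono k]
    congr 1
    apply Finset.filter_congr
    intro x _
    simp [hfst x, hfst k]
  rcases hne.lt_or_gt with h | h
  · exact sig_key α β hαpos h pa hasurj hamono (hpp ▸ hbmono)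
  · exact sig_key β α hβpos h pb hbsurj hbmono (hpp ▸ hamono)
end

section
/- If α < β are positive irrational numbers with the same signature sequence, then for all positive integers e, f, g, h: e + fα < g + hα if and only if e + fβ < g + hβ. -/
/-- If α < β are positive irrationals with the same signature sequence, then for
all positive integers e,f,g,h: e+fα < g+hα ↔ e+fβ < g+hβ. -/
theorem stmt8 (α β : ℝ) (hαpos : 0 < α) (hβpos : 0 < β)
    (hαirr : Irrational α) (hβirr : Irrational β) (hlt : α < β)
    (S : ℕ → ℕ) (ha : IsSignature α S) (hb : IsSignature β S)
    (e f g h : ℕ) (he : 0 < e) (hf : 0 < f) (hg : 0 < g) (hh : 0 < h) :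
    (e : ℝ) + f * α < (g : ℝ) + h * α ↔ (e : ℝ) + f * β < (g : ℝ) + h * β := by

  obtain ⟨p, hp1, hp2, hp3, hp4⟩ := ha
  obtain ⟨q, hq1, hq2, hq3, hq4⟩ := hb
  have hpinj : Function.Injective p := fun a b hab => hp3.injective (by simp [hab])
  have hqinj : Function.Injective q := fun a b hab => hq3.injective (by simp [hab])
  have key : ∀ k, p k = q k := by
    intro k
    induction k using Nat.strong_induction_on with
    | _ k ih =>
      have h1 : (p k).1 = (q k).1 := by rw [← hp4, ← hq4]
      rcases lt_trichotomy (p k).2 (q k).2 with hlt2 | heq2 | hgt2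
      · exfalso
        obtain ⟨m, hm⟩ := hq2 (q k).1 (p k).2 (hq1 k).1 (hp1 k).2
        have hc : ((p k).2 : ℝ) < (q k).2 := by exact_mod_cast hlt2
        have hmk : m < k := by
          have hv : ((q m).1 : ℝ) + (q m).2 * β < (q k).1 + (q k).2 * β := by
            rw [hm]; simp only
            nlinarith
          exact hq3.lt_iff_lt.mp hv
        have hpp : p m = p k := by
          rw [ih m hmk, hm]
          exact Prod.ext_iff.mpr ⟨h1.symm, rfl⟩
        exact hmk.ne (hpinj hpp)
      · exact Prod.ext_iff.mpr ⟨h1, heq2⟩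
      · exfalso
        obtain ⟨m, hm⟩ := hp2 (p k).1 (q k).2 (hp1 k).1 (hq1 k).2
        have hc : ((q k).2 : ℝ) < (p k).2 := by exact_mod_cast hgt2
        have hmk : m < k := by
          have hv : ((p m).1 : ℝ) + (p m).2 * α < (p k).1 + (p k).2 * α := by
            rw [hm]; simp only
            nlinarith
          exact hp3.lt_iff_lt.mp hv
        have hqq : q m = q k := by
          rw [← ih m hmk, hm]
          exact Prod.ext_iff.mpr ⟨h1, rfl⟩
        exact hmk.ne (hqinj hqq)
  obtain ⟨k₁, hk₁⟩ := hp2 e f he hf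
  obtain ⟨k₂, hk₂⟩ := hp2 g h hg hh
  have hA : ((e : ℝ) + f * α < (g : ℝ) + h * α) ↔ k₁ < k₂ := by
    have := hp3.lt_iff_lt (a := k₁) (b := k₂)
    simpa [hk₁, hk₂] using this
  have hB : ((e : ℝ) + f * β < (g : ℝ) + h * β) ↔ k₁ < k₂ := by
    have := hq3.lt_iff_lt (a := k₁) (b := k₂)
    simpa [← key, hk₁, hk₂] using this
  rw [hA, hB]
end

section
/- For any positive irrational θ, the lower-trimmed subsequence of the signature sequence S_θ equals S_θ itself. -/
/-- The evaluation map `(i,j) ↦ i + j θ` is injective for irrational `θ`. -/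
lemma sig_f_inj {θ : ℝ} (hirr : Irrational θ) :
    Function.Injective (fun x : ℕ × ℕ => (x.1 : ℝ) + x.2 * θ) := by
  rintro ⟨i, j⟩ ⟨i', j'⟩ h
  simp only at h
  by_cases hj : j = j'
  · subst hj
    have : (i : ℝ) = i' := by linarith
    have : i = i' := by exact_mod_cast this
    simp [this]
  · exfalso
    have hθ : θ = ((i : ℝ) - i') / ((j' : ℝ) - j) := by
      have hne : (j' : ℝ) - j ≠ 0 := by
        intro h0
        apply hj
        have : (j : ℝ) = j' := by linarith
        exact_mod_cast this
      field_simp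
      linarith
    apply hirr
    refine ⟨((i : ℤ) - i') / ((j' : ℤ) - j), ?_⟩
    rw [hθ]
    push_cast
    ring
-- uniqueness of signature sequences

lemma sig_unique {θ : ℝ} (hirr : Irrational θ) {S T : ℕ → ℕ}
    (hS : IsSignature θ S) (hT : IsSignature θ T) : S = T := by
  obtain ⟨p, hp1, hp2, hp3, hp4⟩ := hS
  obtain ⟨q, hq1, hq2, hq3, hq4⟩ := hT
  set f : ℕ × ℕ → ℝ := fun x => (x.1 : ℝ) + x.2 * θ with hf
  have hfi := sig_f_inj hirr
  have hrange : Set.range (f ∘ p) = Set.range (f ∘ q) := by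
    have h1 : Set.range p = {x : ℕ × ℕ | 0 < x.1 ∧ 0 < x.2} := by
      ext x
      constructor
      · rintro ⟨k, rfl⟩; exact hp1 k
      · rintro ⟨hi, hj⟩
        obtain ⟨k, hk⟩ := hp2 x.1 x.2 hi hj
        exact ⟨k, by rw [hk]⟩
    have h2 : Set.range q = {x : ℕ × ℕ | 0 < x.1 ∧ 0 < x.2} := by
      ext x
      constructor
      · rintro ⟨k, rfl⟩; exact hq1 k
      · rintro ⟨hi, hj⟩
        obtain ⟨k, hk⟩ := hq2 x.1 x.2 hi hj
        exact ⟨k, by rw [hk]⟩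
    rw [Set.range_comp, Set.range_comp, h1, h2]
  have hpq : f ∘ p = f ∘ q := (StrictMono.range_inj hp3 hq3).mp hrange
  have : p = q := funext fun k => hfi (congrFun hpq k)
  funext k
  rw [hp4 k, hq4 k, this]

/-- The lower-trimmed subsequence of a signature sequence is itself. -/
theorem stmt12 (θ : ℝ) (hpos : 0 < θ) (hirr : Irrational θ)
    (S : ℕ → ℕ) (hS : IsSignature θ S) : lowerTrim S = S := by
  obtain ⟨p, hp1, hp2, hp3, hp4⟩ := hS
  set P : ℕ → Prop := fun i => 2 ≤ S i with hP
  have hinf : (setOf P).Infinite := by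
    have : ∀ j : ℕ, ∃ k, p k = (2, j + 1) := fun j => hp2 2 (j + 1) (by norm_num) j.succ_pos
    choose g hg using this
    refine Set.infinite_of_injective_forall_mem (f := g) ?_ ?_
    · intro a b hab
      have : (2, a + 1) = (2, b + 1) := by rw [← hg a, ← hg b, hab]
      simpa using this
    · intro j
      show 2 ≤ S (g j)
      rw [hp4, hg]
  have hmem : ∀ k, 2 ≤ S (Nat.nth P k) := fun k => Nat.nth_mem_of_infinite hinf k
  have hge : ∀ k, 2 ≤ (p (Nat.nth P k)).1 := fun k => by rw [← hp4]; exact hmem k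
  have hLT : IsSignature θ (lowerTrim S) := by
    refine ⟨fun k => ((p (Nat.nth P k)).1 - 1, (p (Nat.nth P k)).2), ?_, ?_, ?_, ?_⟩
    · intro k
      exact ⟨Nat.sub_pos_of_lt (hge k), (hp1 _).2⟩
    · intro i j hi hj
      obtain ⟨k, hk⟩ := hp2 (i + 1) j (by omega) hj
      have hPk : P k := by show 2 ≤ S k; rw [hp4, hk]; omega
      obtain ⟨m, hm⟩ : ∃ m, Nat.nth P m = k := by
        have := Nat.range_nth_of_infinite (p := P) hinf
        have : k ∈ Set.range (Nat.nth P) := this ▸ hPk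
        exact this
      exact ⟨m, by simp [hm, hk]⟩
    · intro a b hab
      have h := hp3 (Nat.nth_strictMono hinf hab)
      have h1a : (1 : ℕ) ≤ (p (Nat.nth P a)).1 := le_trans (by norm_num) (hge a)
      have h1b : (1 : ℕ) ≤ (p (Nat.nth P b)).1 := le_trans (by norm_num) (hge b)
      dsimp only at h ⊢
      rw [Nat.cast_sub h1a, Nat.cast_sub h1b]
      push_cast
      linarith
    · intro k
      exact congrArg (fun n => n - 1) (hp4 (Nat.nth P k))
  exact sig_unique hirr hLT ⟨p, hp1, hp2, hp3, hp4⟩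
end

section
/- For any positive irrational θ, the upper-trimmed subsequence of the signature sequence S_θ equals S_θ itself. -/
/-- The upper-trimmed subsequence of a signature sequence is itself. -/
theorem stmt13 (θ : ℝ) (hpos : 0 < θ) (hirr : Irrational θ)
    (S : ℕ → ℕ) (hS : IsSignature θ S) : upperTrim S = S := by
  obtain ⟨p, hppos, hsurj, hmono, hSk⟩ := hS
  set v : ℕ → ℝ := fun k => ((p k).1 : ℝ) + (p k).2 * θ with hv
  have hlt : ∀ {k l : ℕ}, k < l ↔ v k < v l := fun {k l} => (hmono.lt_iff_lt).symm
  have hvpe : ∀ {a b : ℕ}, p a = p b → v a = v b := by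
    intro a b h; simp only [hv]; rw [h]
  -- the repeat predicate caracterization
  have hPiff : ∀ i, (¬ ∀ j < i, S j ≠ S i) ↔ 2 ≤ (p i).2 := by
    intro i
    constructor
    · intro hi
      push_neg at hi
      obtain ⟨j, hj, hSe⟩ := hi
      by_contra h2
      have h1 : (p i).2 = 1 := le_antisymm (Nat.lt_succ_iff.1 (lt_of_not_ge h2)) (hppos i).2
      have hfst : (p j).1 = (p i).1 := by rw [← hSk, ← hSk]; exact hSe
      have hne : p j ≠ p i := fun h => (hlt.1 hj).ne (hvpe h)
      have h2j : 2 ≤ (p j).2 := by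
        rcases Nat.lt_or_ge (p j).2 2 with h | h
        · exfalso
          have : (p j).2 = 1 := le_antisymm (Nat.lt_succ_iff.1 h) (hppos j).2
          exact hne (Prod.ext hfst (by rw [this, h1]))
        · exact h
      have hvij : v i < v j := by
        simp only [hv, hfst, h1]
        have : (1 : ℝ) * θ < (p j).2 * θ := by
          apply mul_lt_mul_of_pos_right _ hpos
          exact_mod_cast h2j
        push_cast
        linarith
      have := hlt.2 hvij
      omega
    · intro h2
      obtain ⟨k, hk⟩ := hsurj (p i).1 1 (hppos i).1 one_pos
      have hki : k < i := by
        apply hlt.2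
        simp only [hv, hk]
        have : (1 : ℝ) * θ < (p i).2 * θ := by
          apply mul_lt_mul_of_pos_right _ hpos
          exact_mod_cast h2
        push_cast
        linarith
      intro hall
      exact hall k hki (by rw [hSk, hSk, hk])
  -- the shift map σ
  have hσ : ∀ k, ∃ l, p l = ((p k).1, (p k).2 + 1) := fun k =>
    hsurj _ _ (hppos k).1 (Nat.succ_pos _)
  choose σ hσp using hσ
  have hσmono : StrictMono σ := by
    intro k l hkl
    apply hlt.2
    have hvk : v (σ k) = v k + θ := by simp [hv, hσp]; push_cast; ring
    have hvl : v (σ l) = v l + θ := by simp [hv, hσp]; push_cast; ring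
    have := hlt.1 hkl
    rw [hvk, hvl]
    linarith
  have hrange : Set.range σ = setOf (fun i => ¬ ∀ j < i, S j ≠ S i) := by
    ext i
    simp only [Set.mem_range, Set.mem_setOf_eq]
    change (∃ y, σ y = i) ↔ ¬ ∀ j < i, S j ≠ S i
    rw [hPiff]
    constructor
    · rintro ⟨k, rfl⟩
      rw [hσp]
      simpa using Nat.succ_le_of_lt (hppos k).2
    · intro hi
      obtain ⟨k, hk⟩ := hsurj (p i).1 ((p i).2 - 1) (hppos i).1 (by omega)
      refine ⟨k, ?_⟩
      have hpe : p (σ k) = p i := by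
        rw [hσp, hk]
        ext
        · simp
        · simp; omega
      by_contra hne
      rcases Nat.lt_or_ge (σ k) i with h | h
      · exact absurd (hvpe hpe) (hlt.1 h).ne
      · exact absurd (hvpe hpe.symm) (hlt.1 (lt_of_le_of_ne h (Ne.symm hne))).ne
  have hinf : (setOf (fun i => ¬ ∀ j < i, S j ≠ S i)).Infinite := by
    rw [← hrange]
    exact Set.infinite_range_of_injective hσmono.injective
  have hnth : Nat.nth (fun i => ¬ ∀ j < i, S j ≠ S i) = σ := by
    rw [← (Nat.nth_strictMono hinf).range_inj hσmono,
      Nat.range_nth_of_infinite hinf, hrange]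
    rfl
  funext k
  show S (Nat.nth (fun i => ¬ ∀ j < i, S j ≠ S i) k) = S k
  rw [hnth, hSk, hSk, hσp]
end

section
/- Let S be a doubly fractal sequence and for k ∈ ℕ+ let I_k(n) denote the index of the k-th occurrence of n in S. Define the k-th part 𝔓_k(n) = (S(I_k(n)), …, S(I_{k+1}(n) − 1)). Then the upper-trimmed subsequence of 𝔓_{k+1}(n) equals 𝔓_k(n). -/
/-- The index of the k-th occurrence of n in S (0-indexed in k). -/
noncomputable def occIdx (S : ℕ → ℕ) (n : ℕ) : ℕ → ℕ :=
  fun k => Nat.nth (fun i => S i = n) k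

/-- The k-th part of S with respect to n: the terms from the k-th occurrence of n
up to (but not including) the (k+1)-st occurrence of n. -/
noncomputable def part (S : ℕ → ℕ) (n k : ℕ) : List ℕ :=
  (List.range (occIdx S n (k + 1) - occIdx S n k)).map (fun t => S (occIdx S n k + t))

/-- The upper trimming of the (k+1)-st part: delete those terms of the segment that
are first occurrences of their value in S. -/
noncomputable def partUpperTrim (S : ℕ → ℕ) (n k : ℕ) : List ℕ :=
  (((List.range (occIdx S n (k + 2) - occIdx S n (k + 1))).map
      (fun t => occIdx S n (k + 1) + t)).filter
    (fun i => decide (¬ ∀ j < i, S j ≠ S i))).map S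


lemma filter_range_eq_map_nth (p : ℕ → Prop) [DecidablePred p] (N : ℕ) :
    (List.range N).filter (fun i => decide (p i)) =
      (List.range (Nat.count p N)).map (Nat.nth p) := by
  induction N with
  | zero => simp
  | succ N ih =>
    rw [List.range_succ, List.filter_append, ih, Nat.count_succ]
    by_cases h : p N
    · simp [h, List.range_succ, Nat.nth_count h]
    · simp [h]

/-- For a doubly fractal sequence, the upper trimming of the (k+1)-st part
equals the k-th part. -/

theorem stmt15 (S : ℕ → ℕ) (hS : DoublyFractal S)
    (hinf : ∀ m, 0 < m → {i | S i = m}.Infinite)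
    (n : ℕ) (hn : 0 < n) (k : ℕ) :
    partUpperTrim S n k = part S n k := by
  classical
  obtain ⟨hpos, -, h1, hup, -⟩ := hS
  set P : ℕ → Prop := fun i => ¬ ∀ j < i, S j ≠ S i with hPdef
  have hSf : ∀ j, S (Nat.nth P j) = S j := fun j => congrFun hup j
  set Q : ℕ → Prop := fun i => S i = n with hQdef
  have hQinf : (setOf Q).Infinite := hinf n hn
  have hPinf : (setOf P).Infinite := by
    refine (((hinf 1 one_pos).diff (Set.finite_singleton 0))).mono ?_
    rintro i ⟨hi1, hi0⟩ hall
    exact hall 0 (Nat.pos_of_ne_zero (by simpa using hi0)) (by rw [h1, hi1])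
  have hQnth : ∀ m, S (Nat.nth Q m) = n := fun m => Nat.nth_mem_of_infinite hQinf m
  have key : ∀ m, Nat.nth P (Nat.nth Q m) = Nat.nth Q (m + 1) := by
    have hsm1 : StrictMono (fun m => Nat.nth P (Nat.nth Q m)) :=
      (Nat.nth_strictMono hPinf).comp (Nat.nth_strictMono hQinf)
    have hsm2 : StrictMono (fun m => Nat.nth Q (m + 1)) :=
      (Nat.nth_strictMono hQinf).comp (fun a b h => Nat.succ_lt_succ h)
    have hA1 : Set.range (fun m => Nat.nth P (Nat.nth Q m)) = {i | P i ∧ Q i} := by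
      ext i
      constructor
      · rintro ⟨m, rfl⟩
        exact ⟨Nat.nth_mem_of_infinite hPinf _, by
          show S _ = n; rw [hSf]; exact hQnth m⟩
      · rintro ⟨hPi, hQi⟩
        have hc : Nat.nth P (Nat.count P i) = i := Nat.nth_count hPi
        have hQc : Q (Nat.count P i) := by
          show S _ = n
          have := hSf (Nat.count P i)
          rw [hc] at this; rw [← this]; exact hQi
        exact ⟨Nat.count Q (Nat.count P i), by
          simp only []; rw [Nat.nth_count hQc, hc]⟩
    have hA2 : Set.range (fun m => Nat.nth Q (m + 1)) = {i | P i ∧ Q i} := by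
      ext i
      constructor
      · rintro ⟨m, rfl⟩
        refine ⟨fun hall => ?_, hQnth (m + 1)⟩
        exact hall (Nat.nth Q 0) ((Nat.nth_lt_nth hQinf).2 (Nat.succ_pos m))
          (by rw [hQnth 0, hQnth (m + 1)])
      · rintro ⟨hPi, hQi⟩
        have hc : Nat.nth Q (Nat.count Q i) = i := Nat.nth_count hQi
        have hne : Nat.count Q i ≠ 0 := by
          intro h0
          rw [h0, Nat.nth_zero] at hc
          push_neg at hPi
          obtain ⟨j, hj, hj'⟩ := hPi
          have : j ∈ setOf Q := by show S j = n; rw [hj', hQi]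
          have h7 := Nat.sInf_le this; have h8 : sInf (setOf Q) = i := hc; omega
        obtain ⟨m, hm⟩ := Nat.exists_eq_succ_of_ne_zero hne
        exact ⟨m, by show Nat.nth Q (m + 1) = i; rw [← Nat.succ_eq_add_one, ← hm]; exact hc⟩
    exact congrFun ((hsm1.range_inj hsm2).mp (hA1.trans hA2.symm))
  -- list part
  set a := Nat.nth Q k with ha
  set b := Nat.nth Q (k + 1) with hb
  set c := Nat.nth Q (k + 2) with hcc
  have pb : Nat.count P b = a := by rw [hb, ← key k]; exact Nat.count_nth_of_infinite hPinf _
  have pc : Nat.count P c = b := by rw [hcc, ← key (k + 1)]; exact Nat.count_nth_of_infinite hPinf _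
  have hab : a ≤ b := (Nat.nth_le_nth hQinf).2 (by omega)
  have hbc : b ≤ c := (Nat.nth_le_nth hQinf).2 (by omega)
  have hmain : ((List.range (c - b)).map (fun t => b + t)).filter (fun i => decide (P i))
      = (List.range (b - a)).map (fun t => Nat.nth P (a + t)) := by
    have h1 : (List.range c).filter (fun i => decide (P i)) =
        (List.range b).filter (fun i => decide (P i)) ++
        ((List.range (c - b)).map (fun t => b + t)).filter (fun i => decide (P i)) := by
      rw [← List.filter_append]
      congr 1
      have : c = b + (c - b) := by omega
      rw [this, List.range_add]; simp
    rw [filter_range_eq_map_nth, filter_range_eq_map_nth, pc, pb] at h1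
    have h2 : (List.range b).map (Nat.nth P) = (List.range a).map (Nat.nth P) ++
        ((List.range (b - a)).map (fun t => a + t)).map (Nat.nth P) := by
      rw [← List.map_append]
      congr 1
      have : b = a + (b - a) := by omega
      rw [this, List.range_add]; simp
    rw [h2] at h1
    have h3 := List.append_cancel_left h1
    rw [← h3, List.map_map]
    rfl
  have hfilt : ((List.range (c - b)).map (fun t => b + t)).filter
      (fun i => decide (¬ ∀ j < i, S j ≠ S i)) =
      ((List.range (c - b)).map (fun t => b + t)).filter (fun i => decide (P i)) :=
    List.filter_congr (fun x _ => by rw [decide_eq_decide, hPdef])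
  show (((List.range (c - b)).map (fun t => b + t)).filter
      (fun i => decide (¬ ∀ j < i, S j ≠ S i))).map S =
    (List.range (b - a)).map (fun t => S (a + t))
  rw [hfilt, hmain, List.map_map]
  exact List.map_congr_left (fun t _ => hSf (a + t))
end

section
/- In a doubly fractal sequence S whose initial segment is (1,2,…,n,1) with n ≥ 2, between any two consecutive occurrences of n there is exactly one occurrence of 1. -/
open Classical in
/-- A strictly monotone map carrying `p`-elements onto `q`-elements preserves counts. -/
lemma count_map_eq (p q : ℕ → Prop) (f : ℕ → ℕ) (hf : StrictMono f)
    (hmem : ∀ i, p i → q (f i)) (hsur : ∀ y, q y → ∃ i, p i ∧ f i = y) (x : ℕ) :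
    Nat.count q (f x) = Nat.count p x := by
  rw [Nat.count_eq_card_filter_range, Nat.count_eq_card_filter_range]
  refine (Finset.card_bij (fun i _ => f i) ?_ ?_ ?_).symm
  · intro a ha
    simp only [Finset.mem_filter, Finset.mem_range] at ha ⊢
    exact ⟨hf ha.1, hmem a ha.2⟩
  · intro a _ b _ h
    exact hf.injective h
  · intro y hy
    simp only [Finset.mem_filter, Finset.mem_range] at hy
    obtain ⟨i, hpi, hfi⟩ := hsur y hy.2
    refine ⟨i, ?_, hfi⟩
    simp only [Finset.mem_filter, Finset.mem_range]
    exact ⟨hf.lt_iff_lt.mp (by rw [hfi]; exact hy.1), hpi⟩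

open Classical in
/-- A strictly monotone map carrying `p`-elements onto `q`-elements commutes with `nth`. -/
lemma nth_map_eq (p q : ℕ → Prop) (hp : (setOf p).Infinite) (f : ℕ → ℕ) (hf : StrictMono f)
    (hmem : ∀ i, p i → q (f i)) (hsur : ∀ y, q y → ∃ i, p i ∧ f i = y) (j : ℕ) :
    f (Nat.nth p j) = Nat.nth q j := by
  have h1 : q (f (Nat.nth p j)) := hmem _ (Nat.nth_mem_of_infinite hp j)
  have h2 : Nat.count q (f (Nat.nth p j)) = j := by
    rw [count_map_eq p q f hf hmem hsur, Nat.count_nth_of_infinite hp]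
  conv_rhs => rw [← h2]
  exact (Nat.nth_count h1).symm

open Classical in
/-- Removing the least element of an infinite set shifts `nth` by one. -/
lemma nth_shift (p : ℕ → Prop) (hp : (setOf p).Infinite) (j : ℕ) :
    Nat.nth (fun i => p i ∧ ∃ k < i, p k) j = Nat.nth p (j + 1) := by
  have h0 : p (Nat.nth p 0) := Nat.nth_mem_of_infinite hp 0
  have hx : p (Nat.nth p (j + 1)) := Nat.nth_mem_of_infinite hp _
  have h01 : Nat.nth p 0 < Nat.nth p (j + 1) := (Nat.nth_lt_nth hp).mpr (by omega)
  have hq : p (Nat.nth p (j + 1)) ∧ ∃ k < Nat.nth p (j + 1), p k :=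
    ⟨hx, Nat.nth p 0, h01, h0⟩
  have hfil : (Finset.range (Nat.nth p (j + 1))).filter (fun i => p i ∧ ∃ k < i, p k)
      = ((Finset.range (Nat.nth p (j + 1))).filter p).erase (Nat.nth p 0) := by
    ext i
    simp only [Finset.mem_filter, Finset.mem_range, Finset.mem_erase]
    constructor
    · rintro ⟨hi, hpi, k, hk, hpk⟩
      refine ⟨?_, hi, hpi⟩
      intro h0eq
      have hck : 0 < Nat.count p (k + 1) := by
        rw [Nat.count_succ]; simp [hpk]
      have hle : Nat.count p (k + 1) ≤ Nat.count p (Nat.nth p 0) :=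
        Nat.count_monotone p (by omega)
      rw [Nat.count_nth_zero] at hle; omega
    · rintro ⟨hne, hi, hpi⟩
      refine ⟨hi, hpi, Nat.nth p 0, ?_, h0⟩
      have hni := Nat.nth_count hpi
      have hcpos : 0 < Nat.count p i := by
        rcases Nat.eq_zero_or_pos (Nat.count p i) with h | h
        · rw [h] at hni; exact absurd hni.symm hne
        · exact h
      calc Nat.nth p 0 < Nat.nth p (Nat.count p i) := (Nat.nth_lt_nth hp).mpr hcpos
        _ = i := hni
  have hmem0 : Nat.nth p 0 ∈ (Finset.range (Nat.nth p (j + 1))).filter p := by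
    simp only [Finset.mem_filter, Finset.mem_range]
    exact ⟨h01, h0⟩
  have hcount : Nat.count (fun i => p i ∧ ∃ k < i, p k) (Nat.nth p (j + 1)) = j := by
    rw [Nat.count_eq_card_filter_range, hfil, Finset.card_erase_of_mem hmem0,
      ← Nat.count_eq_card_filter_range, Nat.count_nth_of_infinite hp]
    omega
  have hfin := Nat.nth_count (p := fun i => p i ∧ ∃ k < i, p k) hq
  rw [hcount] at hfin
  exact hfin

/-- In a doubly fractal sequence with initial segment (1,2,…,n,1), n ≥ 2, between
any two consecutive occurrences of n there is exactly one occurrence of 1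
(indices shifted to start at 0). -/
theorem stmt16 (S : ℕ → ℕ) (hS : DoublyFractal S) (n : ℕ) (hn : 2 ≤ n)
    (hinit : ∀ k < n, S k = k + 1) (hS1 : S n = 1)
    (a b : ℕ) (ha : S a = n) (hb : S b = n) (hab : a < b)
    (hcons : ∀ c, a < c → c < b → S c ≠ n) :
    ∃! c, a < c ∧ c < b ∧ S c = 1 := by
  classical
  obtain ⟨hpos, hsurj, hS0, hup, hlo⟩ := hS
  set P : ℕ → Prop := fun i => ¬ ∀ j < i, S j ≠ S i with hPdef
  set Q : ℕ → Prop := fun i => 2 ≤ S i with hQdef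
  set ψ : ℕ → ℕ := Nat.nth P with hψdef
  set φ : ℕ → ℕ := Nat.nth Q with hφdef
  have hψS : ∀ k, S (ψ k) = S k := fun k => congrFun hup k
  have hloS : ∀ k, S (φ k) - 1 = S k := fun k => congrFun hlo k
  -- Q is infinite
  have hQinf : (setOf Q).Infinite := by
    apply Set.infinite_of_forall_exists_gt
    intro N
    have hpos' : 0 < (Finset.range (N + 2)).sup S + 1 := by omega
    obtain ⟨i, hi⟩ := hsurj _ hpos'
    have hsup1 : S 0 ≤ (Finset.range (N + 2)).sup S :=
      Finset.le_sup (by simp)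
    refine ⟨i, ?_, ?_⟩
    · show 2 ≤ S i
      omega
    · by_contra hle
      push_neg at hle
      have : S i ≤ (Finset.range (N + 2)).sup S :=
        Finset.le_sup (by simp; omega)
      omega
  -- P is infinite
  have hPinf : (setOf P).Infinite := by
    by_contra hfin
    rw [Set.not_infinite] at hfin
    obtain ⟨i, hiQ, higt⟩ := hQinf.exists_gt hfin.toFinset.card
    have hz : Nat.nth P i = 0 := Nat.nth_of_card_le hfin higt.le
    have h1 := hψS i
    rw [hψdef, hz, hS0] at h1
    have : (2 : ℕ) ≤ S i := hiQ
    omega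
  have hψmono : StrictMono ψ := Nat.nth_strictMono hPinf
  have hφmono : StrictMono φ := Nat.nth_strictMono hQinf
  have hφS : ∀ k, S (φ k) = S k + 1 := by
    intro k
    have h1 := hloS k
    have h2 : Q (φ k) := Nat.nth_mem_of_infinite hQinf k
    have h3 : 2 ≤ S (φ k) := h2
    omega
  have hφgt : ∀ k, k < φ k := by
    intro k
    have hle : k ≤ φ k := Nat.le_nth (fun hf => absurd hf hQinf)
    rcases hle.lt_or_eq with h | h
    · exact h
    · exfalso; have := hφS k; rw [← h] at this; omega
  have hψgt : ∀ k, k < ψ k := by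
    intro k
    induction k with
    | zero =>
      have h0 : ¬ P 0 := by
        intro h
        exact h (fun j hj => absurd hj (Nat.not_lt_zero j))
      have hm : P (ψ 0) := Nat.nth_mem_of_infinite hPinf 0
      rcases Nat.eq_zero_or_pos (ψ 0) with h | h
      · exact absurd (h ▸ hm) h0
      · exact h
    | succ k ih =>
      have h2 : ψ k < ψ (k + 1) := hψmono (by omega)
      omega
  -- every positive value occurs infinitely often
  have hOcc : ∀ m, 0 < m → {i | S i = m}.Infinite := by
    intro m hm
    obtain ⟨i0, hi0⟩ := hsurj m hm
    have hiter : ∀ k, S (ψ^[k] i0) = m := by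
      intro k
      induction k with
      | zero => simpa using hi0
      | succ k ih => rw [Function.iterate_succ_apply', hψS]; exact ih
    have hsm : StrictMono (fun k => ψ^[k] i0) :=
      strictMono_nat_of_lt_succ (fun k => by
        rw [Function.iterate_succ_apply']; exact hψgt _)
    exact Set.infinite_of_injective_forall_mem hsm.injective hiter
  set o : ℕ → ℕ → ℕ := fun m j => Nat.nth (fun i => S i = m) j with hodef
  have hoS : ∀ m, 0 < m → ∀ j, S (o m j) = m := fun m hm j =>
    Nat.nth_mem_of_infinite (hOcc m hm) j
  -- φ maps the j-th occurrence of m to the j-th occurrence of m+1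
  have hφo : ∀ m, 0 < m → ∀ j, φ (o m j) = o (m + 1) j := by
    intro m hm j
    apply nth_map_eq _ _ (hOcc m hm) _ hφmono
    · intro i hi
      show S (φ i) = m + 1
      rw [hφS, hi]
    · intro y hy
      have hQy : Q y := by show 2 ≤ S y; omega
      have h2 : φ (Nat.count Q y) = y := Nat.nth_count hQy
      refine ⟨Nat.count Q y, ?_, h2⟩
      have := hφS (Nat.count Q y)
      rw [h2, hy] at this
      omega
  -- ψ maps the j-th occurrence of m to the (j+1)-th occurrence of m
  have hψo : ∀ m, 0 < m → ∀ j, ψ (o m j) = o m (j + 1) := by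
    intro m hm j
    have h1 : ψ (o m j) = Nat.nth (fun i => S i = m ∧ ∃ k < i, S k = m) j := by
      apply nth_map_eq _ _ (hOcc m hm) _ hψmono
      · intro i hi
        exact ⟨by rw [hψS]; exact hi, i, hψgt i, hi⟩
      · rintro y ⟨hym, k, hk, hkm⟩
        have hPy : P y := by
          intro h
          exact h k hk (by rw [hkm, hym])
        have h2 : ψ (Nat.count P y) = y := Nat.nth_count hPy
        refine ⟨Nat.count P y, ?_, h2⟩
        rw [← hψS (Nat.count P y), h2, hym]
    rw [h1]
    exact nth_shift (fun i => S i = m) (hOcc m hm) j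
  -- interleaving facts
  have hlt1 : ∀ m, 0 < m → ∀ j, o m j < o (m + 1) j := by
    intro m hm j
    rw [← hφo m hm j]
    exact hφgt _
  have hA : ∀ m, 2 ≤ m → ∀ j, o 1 j < o m j := by
    intro m hm
    induction m, hm using Nat.le_induction with
    | base => exact fun j => hlt1 1 (by omega) j
    | succ m hm ih => exact fun j => (ih j).trans (hlt1 m (by omega) j)
  -- base computations
  have hon0 : o n 0 = n - 1 := by
    have hs : S (n - 1) = n := by
      have := hinit (n - 1) (by omega); omega
    have hc : Nat.count (fun i => S i = n) (n - 1) = 0 := by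
      rw [Nat.count_iff_forall_not]
      intro i hi
      have := hinit i (by omega)
      omega
    have := Nat.nth_count (p := fun i => S i = n) hs
    rw [hc] at this
    exact this
  have ho11 : o 1 1 = n := by
    have hc : Nat.count (fun i => S i = 1) n = 1 := by
      rw [Nat.count_eq_card_filter_range]
      have : (Finset.range n).filter (fun i => S i = 1) = {0} := by
        ext i
        simp only [Finset.mem_filter, Finset.mem_range, Finset.mem_singleton]
        constructor
        · rintro ⟨hi, hSi⟩
          have := hinit i hi
          omega
        · rintro rfl
          exact ⟨by omega, hS0⟩
      rw [this, Finset.card_singleton]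
    have := Nat.nth_count (p := fun i => S i = 1) hS1
    rw [hc] at this
    exact this
  have hB : ∀ j, o n j < o 1 (j + 1) := by
    intro j
    induction j with
    | zero => rw [hon0, ho11]; omega
    | succ j ih =>
      have h1 : o n (j + 1) = ψ (o n j) := (hψo n (by omega) j).symm
      have h2 : o 1 (j + 2) = ψ (o 1 (j + 1)) := (hψo 1 (by omega) (j + 1)).symm
      rw [h1, h2]
      exact hψmono ih
  -- identify a and b as consecutive occurrences of n
  have hninf := hOcc n (by omega)
  have h1inf := hOcc 1 (by omega)
  set j : ℕ := Nat.count (fun i => S i = n) a with hjdef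
  have haj : o n j = a := Nat.nth_count ha
  have hbj : o n (j + 1) = b := by
    have hb' : o n (Nat.count (fun i => S i = n) b) = b := Nat.nth_count hb
    have h1 : j + 1 ≤ Nat.count (fun i => S i = n) b := by
      have hmono : Nat.count (fun i => S i = n) (a + 1) ≤ Nat.count (fun i => S i = n) b :=
        Nat.count_monotone _ (by omega)
      rw [Nat.count_succ] at hmono
      simp only [ha, if_true, eq_self_iff_true, if_pos] at hmono
      rw [← hjdef] at hmono
      omega
    rcases eq_or_lt_of_le h1 with h | h
    · rw [h]; exact hb'
    · exfalso
      have h2 : a < o n (j + 1) := by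
        rw [← haj]; exact (Nat.nth_lt_nth hninf).mpr (by omega)
      have h3 : o n (j + 1) < b := by
        rw [← hb']; exact (Nat.nth_lt_nth hninf).mpr h
      exact hcons _ h2 h3 (hoS n (by omega) (j + 1))
  refine ⟨o 1 (j + 1), ⟨?_, ?_, ?_⟩, ?_⟩
  · rw [← haj]; exact hB j
  · rw [← hbj]; exact hA n hn (j + 1)
  · exact hoS 1 (by omega) (j + 1)
  · rintro c ⟨hc1, hc2, hc3⟩
    have hcj : o 1 (Nat.count (fun i => S i = 1) c) = c := Nat.nth_count hc3
    set j' : ℕ := Nat.count (fun i => S i = 1) c with hj'def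
    have hgt : j < j' := by
      have : o 1 j < o 1 j' := by
        calc o 1 j < o n j := hA n hn j
          _ = a := haj
          _ < c := hc1
          _ = o 1 j' := hcj.symm
      exact (Nat.nth_lt_nth h1inf).mp this
    have hlt : j' < j + 2 := by
      have : o 1 j' < o 1 (j + 2) := by
        calc o 1 j' = c := hcj
          _ < b := hc2
          _ = o n (j + 1) := hbj.symm
          _ < o 1 (j + 2) := hB (j + 1)
      exact (Nat.nth_lt_nth h1inf).mp this
    have : j' = j + 1 := by omega
    rw [← hcj, this]
end
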